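/- Let P̃ be the pushforward of P under the map x ↦ aUx + b, where U is a unitary operator on H, a ≠ 0 is a real scalar, and b ∈ H. Then the population trimmed mean satisfies μ(P̃) = aU(μ(P)) + b. -/

import Mathlib

open MeasureTheory
open scoped RealInnerProductSpace Pointwise

/-- `F_P(t; v) = P(‖X − v‖ ≤ t)`. -/
noncomputable def Fpop {H : Type*} [NormedAddCommGroup H] [MeasurableSpace H]
    (P : Measure H) (t : ℝ) (v : H) : ℝ :=
  (P {x | ‖x - v‖ ≤ t}).toReal

/-- The α-radius `r_P(v) = inf {t ≥ 0 : F_P(t; v) ≥ α}`. -/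
noncomputable def rpop {H : Type*} [NormedAddCommGroup H] [MeasurableSpace H]
    (α : ℝ) (P : Measure H) (v : H) : ℝ :=
  sInf {t : ℝ | 0 ≤ t ∧ α ≤ Fpop P t v}

/-- `G_P(t) = P(r_P(X) ≤ t)`. -/
noncomputable def Gpop {H : Type*} [NormedAddCommGroup H] [MeasurableSpace H]
    (α : ℝ) (P : Measure H) (t : ℝ) : ℝ :=
  (P {x | rpop α P x ≤ t}).toReal

/-- The population weight function `w_P(v) = g(G_P(r_P(v)))`. -/
noncomputable def wpop {H : Type*} [NormedAddCommGroup H] [MeasurableSpace H]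
    (g : ℝ → ℝ) (α : ℝ) (P : Measure H) (v : H) : ℝ :=
  g (Gpop α P (rpop α P v))

/-- The population trimmed mean `μ(P) = E_P[w_P(X)X] / E_P[w_P(X)]`. -/
noncomputable def meanPop {H : Type*} [NormedAddCommGroup H] [InnerProductSpace ℝ H]
    [CompleteSpace H] [MeasurableSpace H] (g : ℝ → ℝ) (α : ℝ) (P : Measure H) : H :=
  (∫ x, wpop g α P x ∂P)⁻¹ • ∫ x, wpop g α P x • x ∂P

/-- The population trimmed covariance operator
`C(P)(h) = E_P[w_P(X)⟨X − μ(P), h⟩(X − μ(P))] / E_P[w_P(X)]`. -/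
noncomputable def covPop {H : Type*} [NormedAddCommGroup H] [InnerProductSpace ℝ H]
    [CompleteSpace H] [MeasurableSpace H] (g : ℝ → ℝ) (α : ℝ) (P : Measure H) (h : H) : H :=
  (∫ x, wpop g α P x ∂P)⁻¹ •
    ∫ x, (wpop g α P x * ⟪x - meanPop g α P, h⟫) • (x - meanPop g α P) ∂P

section AuxEquiv

open Filter Topology

variable {H : Type*} [NormedAddCommGroup H] [MeasurableSpace H]

lemma exists_nat_prob (P : Measure H) [IsProbabilityMeasure P] (h : H → ℝ) {c : ℝ} (hc : c < 1) :
    ∃ n : ℕ, c ≤ (P {x | h x ≤ (n : ℝ)}).toReal := by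
  have hmono : Monotone (fun n : ℕ => {x | h x ≤ (n : ℝ)}) := by
    intro m n hmn x hx
    simp only [Set.mem_setOf_eq] at hx ⊢
    exact le_trans hx (Nat.cast_le.mpr hmn)
  have hU : ⋃ n : ℕ, {x | h x ≤ (n : ℝ)} = Set.univ := by
    ext x
    simp only [Set.mem_iUnion, Set.mem_setOf_eq, Set.mem_univ, iff_true]
    exact exists_nat_ge (h x)
  have h1 := tendsto_measure_iUnion_atTop (μ := P) hmono
  rw [hU, measure_univ] at h1
  have h2 : Tendsto (fun n : ℕ => (P {x | h x ≤ (n : ℝ)}).toReal) atTop (𝓝 1) := by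
    have := (ENNReal.tendsto_toReal ENNReal.one_ne_top).comp h1
    exact this
  exact (h2.eventually_const_le hc).exists

lemma rpop_set_nonempty (P : Measure H) [IsProbabilityMeasure P] {α : ℝ} (hα : α < 1) (v : H) :
    {t : ℝ | 0 ≤ t ∧ α ≤ Fpop P t v}.Nonempty := by
  obtain ⟨n, hn⟩ := exists_nat_prob P (fun x => ‖x - v‖) hα
  exact ⟨(n : ℝ), n.cast_nonneg, hn⟩

lemma Fpop_mono_le (P : Measure H) [IsProbabilityMeasure P] {t s : ℝ} (h : t ≤ s) (v : H) :
    Fpop P t v ≤ Fpop P s v := by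
  refine ENNReal.toReal_mono (measure_ne_top _ _) (measure_mono ?_)
  intro x hx
  simp only [Set.mem_setOf_eq] at hx ⊢
  exact le_trans hx h

lemma rpop_le_add (P : Measure H) [IsProbabilityMeasure P] {α : ℝ} (hα : α < 1) (v v' : H) :
    rpop α P v ≤ rpop α P v' + ‖v - v'‖ := by
  have hbdd : BddBelow {t : ℝ | 0 ≤ t ∧ α ≤ Fpop P t v} := ⟨0, fun s hs => hs.1⟩
  have key : ∀ t ∈ {t : ℝ | 0 ≤ t ∧ α ≤ Fpop P t v'}, rpop α P v ≤ t + ‖v - v'‖ := by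
    rintro t ⟨ht0, htα⟩
    refine csInf_le hbdd ⟨by positivity, le_trans htα ?_⟩
    refine ENNReal.toReal_mono (measure_ne_top _ _) (measure_mono ?_)
    intro x hx
    simp only [Set.mem_setOf_eq] at hx ⊢
    calc ‖x - v‖ ≤ ‖x - v'‖ + ‖v' - v‖ := norm_sub_le_norm_sub_add_norm_sub x v' v
    _ ≤ t + ‖v - v'‖ := by rw [norm_sub_rev v']; exact add_le_add hx le_rfl
  have h2 : rpop α P v - ‖v - v'‖ ≤ rpop α P v' :=
    le_csInf (rpop_set_nonempty P hα v') fun t ht => by linarith [key t ht]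
  linarith

lemma continuous_rpop (P : Measure H) [IsProbabilityMeasure P] {α : ℝ} (hα : α < 1) :
    Continuous (rpop α P) := by
  have : LipschitzWith 1 (rpop α P) := by
    refine LipschitzWith.of_dist_le_mul fun v v' => ?_
    rw [NNReal.coe_one, one_mul, Real.dist_eq, dist_eq_norm, abs_le]
    constructor
    · have := rpop_le_add P hα v' v
      rw [norm_sub_rev v'] at this
      linarith
    · linarith [rpop_le_add P hα v v']
  exact this.continuous

lemma gpop_mono (P : Measure H) [IsProbabilityMeasure P] (α : ℝ) : Monotone (Gpop α P) := by
  intro t s h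
  refine ENNReal.toReal_mono (measure_ne_top _ _) (measure_mono ?_)
  intro x hx
  simp only [Set.mem_setOf_eq] at hx ⊢
  exact le_trans hx h

lemma gpop_mem_Icc (P : Measure H) [IsProbabilityMeasure P] (α t : ℝ) :
    Gpop α P t ∈ Set.Icc (0 : ℝ) 1 :=
  ⟨ENNReal.toReal_nonneg, by simpa [Gpop] using ENNReal.toReal_mono ENNReal.one_ne_top prob_le_one⟩

lemma measurable_wpop [TopologicalSpace H] [BorelSpace H] {P : Measure H} [IsProbabilityMeasure P]
    {α : ℝ} (hα : α < 1) {g : ℝ → ℝ} {β : ℝ}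
    (hg_mono : AntitoneOn g (Set.Icc (0 : ℝ) 1)) (hcont : Continuous (rpop α P)) :
    Measurable (wpop g α P) := by
  set g' : ℝ → ℝ := fun t => g (max 0 (min 1 t)) with hg'
  have hclamp : ∀ t : ℝ, max 0 (min 1 t) ∈ Set.Icc (0 : ℝ) 1 :=
    fun t => ⟨le_max_left _ _, max_le zero_le_one (min_le_left _ _)⟩
  have hg'anti : Antitone g' := by
    intro s t h
    exact hg_mono (hclamp s) (hclamp t) (max_le_max le_rfl (min_le_min le_rfl h))
  have key : wpop g α P = fun x => g' (Gpop α P (rpop α P x)) := by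
    funext x
    have hmem := gpop_mem_Icc P α (rpop α P x)
    simp only [wpop, hg', min_eq_right hmem.2, max_eq_right hmem.1]
  rw [key]
  exact hg'anti.measurable.comp ((gpop_mono P α).measurable.comp hcont.measurable)

end AuxEquiv

/-- If `P̃` is the pushforward of `P` under `x ↦ a • U x + b` with `U`
unitary, `a ≠ 0`, `b ∈ H`, then the population trimmed mean satisfies
`μ(P̃) = a • U(μ(P)) + b`. -/
theorem meanPop_equivariance
    {H : Type*} [NormedAddCommGroup H] [InnerProductSpace ℝ H] [CompleteSpace H]
    [SecondCountableTopology H] [MeasurableSpace H] [BorelSpace H]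
    (P : Measure H) [IsProbabilityMeasure P]
    (α β : ℝ) (hα : 0 < α) (hα' : α ≤ 1 / 2) (hβ : 0 < β) (hβ' : β ≤ 1 / 2)
    (g : ℝ → ℝ)
    (hg_nonneg : ∀ t ∈ Set.Icc (0 : ℝ) 1, 0 ≤ g t)
    (hg_bdd : BddAbove (g '' Set.Icc (0 : ℝ) 1))
    (hg_mono : AntitoneOn g (Set.Icc (0 : ℝ) 1))
    (hg_pos : ∀ t ∈ Set.Icc (0 : ℝ) 1, t < 1 - β → 0 < g t)
    (hg_zero : ∀ t ∈ Set.Icc (0 : ℝ) 1, 1 - β ≤ t → g t = 0)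
    (hE : 0 < ∫ x, wpop g α P x ∂P)
    (U : H ≃ₗᵢ[ℝ] H) (a : ℝ) (ha : a ≠ 0) (b : H)
    (Pt : Measure H) (hPt : Pt = Measure.map (fun x => a • U x + b) P) :
    meanPop g α Pt = a • U (meanPop g α P) + b := by
  have hα1 : α < 1 := by linarith
  -- bound on g
  obtain ⟨M, hM⟩ : ∃ M, ∀ t ∈ Set.Icc (0 : ℝ) 1, g t ≤ M := by
    obtain ⟨M, hM⟩ := hg_bdd
    exact ⟨M, fun t ht => hM (Set.mem_image_of_mem g ht)⟩
  have hMnn : (0 : ℝ) ≤ M :=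
    le_trans (hg_nonneg 0 ⟨le_rfl, zero_le_one⟩) (hM 0 ⟨le_rfl, zero_le_one⟩)
  have hw_nonneg : ∀ x, 0 ≤ wpop g α P x := fun x => hg_nonneg _ (gpop_mem_Icc P α _)
  have hw_le : ∀ x, wpop g α P x ≤ M := fun x => hM _ (gpop_mem_Icc P α _)
  -- radius lower bound via n0
  obtain ⟨n0, hn0⟩ := exists_nat_prob P (fun x => ‖x‖) (show 1 - α / 2 < 1 by linarith)
  obtain ⟨m0, hm0⟩ := exists_nat_prob P (rpop α P) (show 1 - β < 1 by linarith)
  have hr_lb : ∀ x : H, ‖x‖ - n0 ≤ rpop α P x := by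
    intro x
    refine le_csInf (rpop_set_nonempty P hα1 x) ?_
    rintro t ⟨ht0, htα⟩
    by_contra hlt
    push_neg at hlt
    have hsub : {y : H | ‖y - x‖ ≤ t} ⊆ {y : H | ¬ (‖y‖ ≤ (n0 : ℝ))} := by
      intro y hy
      simp only [Set.mem_setOf_eq, not_le] at hy ⊢
      have h1 : ‖x‖ ≤ ‖y‖ + ‖y - x‖ := by
        calc ‖x‖ = ‖y - (y - x)‖ := by rw [sub_sub_cancel]
        _ ≤ ‖y‖ + ‖y - x‖ := norm_sub_le _ _
      linarith
    have hle : Fpop P t x ≤ (P {y : H | ¬ (‖y‖ ≤ (n0 : ℝ))}).toReal :=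
      ENNReal.toReal_mono (measure_ne_top _ _) (measure_mono hsub)
    have hcompl : (P {y : H | ¬ (‖y‖ ≤ (n0 : ℝ))}).toReal
        = 1 - (P {y : H | ‖y‖ ≤ (n0 : ℝ)}).toReal := by
      have hms : MeasurableSet {y : H | ‖y‖ ≤ (n0 : ℝ)} :=
        measurableSet_le continuous_norm.measurable measurable_const
      have hset : {y : H | ¬ (‖y‖ ≤ (n0 : ℝ))} = {y : H | ‖y‖ ≤ (n0 : ℝ)}ᶜ := rfl
      rw [hset, measure_compl hms (measure_ne_top _ _), measure_univ,
        ENNReal.toReal_sub_of_le prob_le_one ENNReal.one_ne_top, ENNReal.toReal_one]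
    rw [hcompl] at hle
    linarith
  -- support bound
  have hsupp : ∀ x : H, wpop g α P x ≠ 0 → ‖x‖ ≤ (m0 : ℝ) + n0 := by
    intro x hx
    have hGr : Gpop α P (rpop α P x) < 1 - β := by
      by_contra h
      push_neg at h
      exact hx (hg_zero _ (gpop_mem_Icc P α _) h)
    have hr : rpop α P x < (m0 : ℝ) := by
      by_contra h
      push_neg at h
      exact absurd (le_trans hm0 (gpop_mono P α h)) (not_le.mpr hGr)
    linarith [hr_lb x]
  have hbound : ∀ x : H, ‖wpop g α P x • x‖ ≤ M * ((m0 : ℝ) + n0) := by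
    intro x
    rw [norm_smul, Real.norm_eq_abs, abs_of_nonneg (hw_nonneg x)]
    rcases eq_or_ne (wpop g α P x) 0 with h0 | h0
    · rw [h0, zero_mul]
      positivity
    · exact mul_le_mul (hw_le x) (hsupp x h0) (norm_nonneg x) hMnn
  -- measurability and integrability
  have hwmeas : Measurable (wpop g α P) :=
    measurable_wpop (β := β) hα1 hg_mono (continuous_rpop P hα1)
  have hint_w : Integrable (wpop g α P) P :=
    ⟨hwmeas.aestronglyMeasurable, HasFiniteIntegral.of_bounded (C := M)
      (Filter.Eventually.of_forall fun x => by
        rw [Real.norm_eq_abs, abs_of_nonneg (hw_nonneg x)]; exact hw_le x)⟩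
  have hint_wx : Integrable (fun x => wpop g α P x • x) P :=
    ⟨(hwmeas.aestronglyMeasurable.smul aestronglyMeasurable_id),
      HasFiniteIntegral.of_bounded (Filter.Eventually.of_forall hbound)⟩
  -- the measurable equivalence T
  have habs : (0 : ℝ) < |a| := abs_pos.mpr ha
  let e : H ≃ₜ H := (U.toHomeomorph.trans (Homeomorph.smulOfNeZero a ha)).trans
    (Homeomorph.addRight b)
  let T : H ≃ᵐ H := e.toMeasurableEquiv
  have hT : ∀ x, T x = a • U x + b := fun x => rfl
  have hPt' : Pt = Measure.map (⇑T) P := hPt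
  have hPtapply : ∀ s : Set H, Pt s = P (⇑T ⁻¹' s) := fun s => by
    rw [hPt']; exact T.map_apply s
  -- transformation of Fpop
  have hF : ∀ (t : ℝ) (v : H), Fpop Pt t (T v) = Fpop P (t / |a|) v := by
    intro t v
    rw [Fpop, Fpop, hPtapply]
    congr 2
    ext y
    simp only [Set.mem_preimage, Set.mem_setOf_eq]
    have hnorm : ‖T y - T v‖ = |a| * ‖y - v‖ := by
      rw [hT, hT]
      rw [add_sub_add_right_eq_sub, ← smul_sub, norm_smul, ← LinearIsometryEquiv.map_sub,
        U.norm_map, Real.norm_eq_abs]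
    rw [hnorm, mul_comm]
    exact (le_div_iff₀ habs).symm
  -- transformation of rpop
  have hr : ∀ v : H, rpop α Pt (T v) = |a| * rpop α P v := by
    intro v
    have hset : {t : ℝ | 0 ≤ t ∧ α ≤ Fpop Pt t (T v)}
        = |a| • {t : ℝ | 0 ≤ t ∧ α ≤ Fpop P t v} := by
      ext t
      simp only [Set.mem_smul_set, Set.mem_setOf_eq]
      constructor
      · rintro ⟨ht0, htF⟩
        rw [hF] at htF
        exact ⟨t / |a|, ⟨div_nonneg ht0 habs.le, htF⟩, by
          rw [smul_eq_mul]; field_simp⟩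
      · rintro ⟨s, ⟨hs0, hsF⟩, rfl⟩
        rw [smul_eq_mul]
        refine ⟨by positivity, ?_⟩
        rw [hF, mul_div_cancel_left₀ _ habs.ne']
        exact hsF
    rw [rpop, hset, Real.sInf_smul_of_nonneg (abs_nonneg a), smul_eq_mul, rpop]
  have hrx : ∀ x : H, rpop α Pt x = |a| * rpop α P (T.symm x) := fun x => by
    conv_lhs => rw [← T.apply_symm_apply x]
    exact hr _
  -- transformation of Gpop
  have hG : ∀ t : ℝ, Gpop α Pt t = Gpop α P (t / |a|) := by
    intro t
    rw [Gpop, Gpop, hPtapply]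
    congr 2
    ext y
    simp only [Set.mem_preimage, Set.mem_setOf_eq]
    rw [hrx (T y), T.symm_apply_apply, mul_comm]
    exact (le_div_iff₀ habs).symm
  -- transformation of wpop
  have hw : ∀ v : H, wpop g α Pt (T v) = wpop g α P v := by
    intro v
    rw [wpop, wpop, hr, hG, mul_comm, mul_div_assoc, div_self habs.ne', mul_one]
  -- transport of integrals
  have hIw : ∫ x, wpop g α Pt x ∂Pt = ∫ x, wpop g α P x ∂P := by
    have h1 := MeasureTheory.integral_map_equiv (μ := P) T (fun x => wpop g α Pt x)
    rw [← hPt'] at h1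
    rw [h1]
    simp only [hw]
  have hIwx : ∫ x, wpop g α Pt x • x ∂Pt
      = a • U (∫ x, wpop g α P x • x ∂P) + (∫ x, wpop g α P x ∂P) • b := by
    have h1 := MeasureTheory.integral_map_equiv (μ := P) T (fun x => wpop g α Pt x • x)
    rw [← hPt'] at h1
    rw [h1]
    have h2 : ∀ y : H, wpop g α Pt (T y) • (T y)
        = a • (U.toLinearIsometry (wpop g α P y • y)) + wpop g α P y • b := by
      intro y
      rw [hw, hT]
      rw [smul_add]
      congr 1
      rw [LinearIsometry.map_smul, LinearIsometryEquiv.coe_toLinearIsometry,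
        smul_comm]
    simp only [h2]
    have hintU : Integrable (fun y => U.toLinearIsometry (wpop g α P y • y)) P :=
      U.toLinearIsometry.toContinuousLinearMap.integrable_comp hint_wx
    have hintaU : Integrable (fun y => a • (U.toLinearIsometry (wpop g α P y • y))) P :=
      hintU.smul a
    have hintwb : Integrable (fun y => wpop g α P y • b) P := hint_w.smul_const b
    rw [integral_add hintaU hintwb, integral_smul, U.toLinearIsometry.integral_comp_comm,
      integral_smul_const, LinearIsometryEquiv.coe_toLinearIsometry]
  -- conclusion
  rw [meanPop, meanPop, hIw, hIwx]
  set c := ∫ x, wpop g α P x ∂P with hc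
  set I := ∫ x, wpop g α P x • x ∂P with hI
  rw [LinearIsometryEquiv.map_smul, smul_add, smul_comm c⁻¹ a, smul_smul c⁻¹ c,
    inv_mul_cancel₀ (ne_of_gt hE), one_smul]
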